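/- arXiv:2412.01735 — 5 statements merged into one kernel-verified Lean document; each statement's English description precedes it below -/
import Mathlib

section
/- For every T ∈ B(X) and every scalar α ∈ 𝔽, T is numerical radius parallel to αI, where I is the identity operator. -/
open Filter Topology

variable {𝕜 : Type*} [RCLike 𝕜] {X : Type*} [NormedAddCommGroup X] [NormedSpace 𝕜 X]

/-- The numerical radius of a bounded linear operator on a normed space:
`v(T) = sup {|x*(Tx)| : x ∈ S_X, x* ∈ J(x)}`. -/
noncomputable def nrad (T : X →L[𝕜] X) : ℝ :=
  sSup {r : ℝ | ∃ (x : X) (f : X →L[𝕜] 𝕜), ‖x‖ = 1 ∧ ‖f‖ = 1 ∧ f x = 1 ∧ r = ‖f (T x)‖}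

/-- Numerical radius parallelism: `T ∥_v S`. -/
def NRadParallel (T S : X →L[𝕜] X) : Prop :=
  ∃ lam : 𝕜, ‖lam‖ = 1 ∧ nrad (T + lam • S) = nrad T + nrad S

/-- Numerical radius Birkhoff orthogonality: `T ⊥_{vB} S`. -/
def NRadBirkhoff (T S : X →L[𝕜] X) : Prop :=
  ∀ α : 𝕜, nrad T ≤ nrad (T + α • S)

/-- The set defining the numerical radius. -/
def nradSet (T : X →L[𝕜] X) : Set ℝ :=
  {r : ℝ | ∃ (x : X) (f : X →L[𝕜] 𝕜), ‖x‖ = 1 ∧ ‖f‖ = 1 ∧ f x = 1 ∧ r = ‖f (T x)‖}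

lemma nrad_eq_sSup (T : X →L[𝕜] X) : nrad T = sSup (nradSet T) := rfl

lemma nradSet_bddAbove (T : X →L[𝕜] X) : BddAbove (nradSet T) := by
  refine ⟨‖T‖, fun r hr => ?_⟩
  obtain ⟨x, f, hx, hf, hfx, rfl⟩ := hr
  calc ‖f (T x)‖ ≤ ‖f‖ * ‖T x‖ := f.le_opNorm _
    _ ≤ ‖f‖ * (‖T‖ * ‖x‖) := by
        exact mul_le_mul_of_nonneg_left (T.le_opNorm _) (norm_nonneg _)
    _ = ‖T‖ := by rw [hx, hf]; ring

lemma le_nrad (T : X →L[𝕜] X) {r : ℝ} (hr : r ∈ nradSet T) : r ≤ nrad T :=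
  le_csSup (nradSet_bddAbove T) hr

/-- Alignment: for any `a b : 𝕜` there is a unimodular `lam` with
`‖a + lam * b‖ = ‖a‖ + ‖b‖`. -/
lemma exists_align (a b : 𝕜) : ∃ lam : 𝕜, ‖lam‖ = 1 ∧ ‖a + lam * b‖ = ‖a‖ + ‖b‖ := by
  set u : 𝕜 := if a = 0 then 1 else a * (‖a‖ : 𝕜)⁻¹ with hu
  set v : 𝕜 := if b = 0 then 1 else b * (‖b‖ : 𝕜)⁻¹ with hv
  have hun : ‖u‖ = 1 := by
    rw [hu]; split_ifs with h
    · simp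
    · rw [norm_mul, norm_inv, RCLike.norm_ofReal, abs_of_nonneg (norm_nonneg a)]
      field_simp [norm_ne_zero_iff.mpr h]
  have ha : a = u * (‖a‖ : 𝕜) := by
    rw [hu]; split_ifs with h
    · simp [h]
    · have hna : (‖a‖ : 𝕜) ≠ 0 := by
        exact_mod_cast RCLike.ofReal_ne_zero.mpr (norm_ne_zero_iff.mpr h)
      field_simp
  have hvb : (starRingEnd 𝕜 v) * b = (‖b‖ : 𝕜) := by
    rw [hv]; split_ifs with h
    · simp [h]
    · have hnb : (‖b‖ : 𝕜) ≠ 0 := RCLike.ofReal_ne_zero.mpr (norm_ne_zero_iff.mpr h)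
      rw [map_mul, map_inv₀, RCLike.conj_ofReal, mul_comm (starRingEnd 𝕜 b),
        mul_assoc, mul_comm (starRingEnd 𝕜 b) b, RCLike.mul_conj, mul_comm,
        sq, mul_assoc, mul_inv_cancel₀ hnb, mul_one]
  refine ⟨u * starRingEnd 𝕜 v, by
    rw [norm_mul, hun, RCLike.norm_conj, one_mul]
    rw [hv]; split_ifs with h
    · simp
    · rw [norm_mul, norm_inv, RCLike.norm_ofReal, abs_of_nonneg (norm_nonneg b)]
      field_simp [norm_ne_zero_iff.mpr h], ?_⟩
  have : a + u * starRingEnd 𝕜 v * b = u * ((‖a‖ : 𝕜) + (‖b‖ : 𝕜)) := by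
    rw [mul_assoc, hvb]; nth_rewrite 1 [ha]; ring
  rw [this, norm_mul, hun, one_mul]
  rw [show ((‖a‖ : 𝕜) + (‖b‖ : 𝕜)) = ((‖a‖ + ‖b‖ : ℝ) : 𝕜) by push_cast; ring,
    RCLike.norm_ofReal, abs_of_nonneg (by positivity)]

theorem stmt2 (T : X →L[𝕜] X) (α : 𝕜) :
    NRadParallel T (α • ContinuousLinearMap.id 𝕜 X) := by
  set S := α • ContinuousLinearMap.id 𝕜 X with hS
  rcases subsingleton_or_nontrivial X with hX | hX
  · refine ⟨1, norm_one, ?_⟩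
    have hz : ∀ U : X →L[𝕜] X, nrad U = 0 := by
      intro U
      have hE : nradSet U = ∅ := by
        ext r
        simp only [nradSet, Set.mem_setOf_eq, Set.mem_empty_iff_false, iff_false]
        rintro ⟨x, f, hx, -⟩
        rw [Subsingleton.elim x 0, norm_zero] at hx
        exact one_ne_zero hx.symm
      rw [nrad_eq_sSup, hE, Real.sSup_empty]
    rw [hz, hz, hz]; ring
  · obtain ⟨x₀, hx₀⟩ := exists_ne (0 : X)
    set y : X := ((‖x₀‖ : 𝕜))⁻¹ • x₀ with hyd
    have hy : ‖y‖ = 1 := norm_smul_inv_norm hx₀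
    obtain ⟨f₀, hf₀, hf₀y⟩ := exists_dual_vector 𝕜 y (by
      intro h; rw [h] at hy; exact one_ne_zero hy.symm)
    have hf₀y1 : (f₀ : X →L[𝕜] 𝕜) y = 1 := by rw [hf₀y, hy]; norm_num
    have hne : ∀ U : X →L[𝕜] X, (nradSet U).Nonempty :=
      fun U => ⟨_, y, f₀, hy, hf₀, hf₀y1, rfl⟩
    -- value of f on (T + lam • S) x when f x = 1
    have hval : ∀ (lam : 𝕜) (x : X) (f : X →L[𝕜] 𝕜), f x = 1 →
        f ((T + lam • S) x) = f (T x) + lam * α := by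
      intro lam x f hfx
      simp [hS, hfx, mul_comm]
    -- numerical radius of S is ‖α‖
    have hSval : nrad S = ‖α‖ := by
      apply le_antisymm
      · apply csSup_le (hne S)
        rintro r ⟨x, f, hx, hf, hfx, rfl⟩
        simp [hS, hfx]
      · refine le_nrad S ⟨y, f₀, hy, hf₀, hf₀y1, ?_⟩
        simp [hS, hf₀y1]
    set F : 𝕜 → ℝ := fun lam => nrad (T + lam • S) with hF
    -- one-sided Lipschitz bound
    have hlip : ∀ lam mu : 𝕜, F lam ≤ F mu + ‖lam - mu‖ * ‖α‖ := by
      intro lam mu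
      apply csSup_le (hne _)
      rintro r ⟨x, f, hx, hf, hfx, rfl⟩
      have h1 : f ((T + lam • S) x) = f ((T + mu • S) x) + (lam - mu) * α := by
        rw [hval lam x f hfx, hval mu x f hfx]; ring
      rw [h1]
      calc ‖f ((T + mu • S) x) + (lam - mu) * α‖
          ≤ ‖f ((T + mu • S) x)‖ + ‖(lam - mu) * α‖ := norm_add_le _ _
        _ ≤ F mu + ‖lam - mu‖ * ‖α‖ :=
            add_le_add (le_nrad _ ⟨x, f, hx, hf, hfx, rfl⟩) (by rw [norm_mul])
    have hcont : Continuous F := by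
      refine (LipschitzWith.of_dist_le_mul (K := ‖α‖₊) fun lam mu => ?_).continuous
      rw [Real.dist_eq, abs_sub_le_iff, dist_eq_norm, coe_nnnorm]
      constructor
      · have := hlip lam mu; nlinarith [norm_nonneg (lam - mu), norm_nonneg α]
      · have := hlip mu lam
        rw [norm_sub_rev] at this
        nlinarith [norm_nonneg (lam - mu), norm_nonneg α]
    obtain ⟨lam₀, hlam₀mem, hmax⟩ := (isCompact_sphere (0 : 𝕜) 1).exists_isMaxOn
      ⟨1, by simp⟩ hcont.continuousOn
    have hlam₀ : ‖lam₀‖ = 1 := by simpa using hlam₀mem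
    -- upper bound
    have hub : F lam₀ ≤ nrad T + ‖α‖ := by
      apply csSup_le (hne _)
      rintro r ⟨x, f, hx, hf, hfx, rfl⟩
      rw [hval lam₀ x f hfx]
      calc ‖f (T x) + lam₀ * α‖ ≤ ‖f (T x)‖ + ‖lam₀ * α‖ := norm_add_le _ _
        _ ≤ nrad T + ‖α‖ := add_le_add (le_nrad T ⟨x, f, hx, hf, hfx, rfl⟩)
            (by rw [norm_mul, hlam₀, one_mul])
    -- lower bound
    have hlb : nrad T + ‖α‖ ≤ F lam₀ := by
      have key : nrad T ≤ F lam₀ - ‖α‖ := by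
        apply csSup_le (hne T)
        rintro r ⟨x, f, hx, hf, hfx, rfl⟩
        obtain ⟨lam, hlam, halign⟩ := exists_align (f (T x)) α
        have h1 : ‖f (T x)‖ + ‖α‖ = ‖f ((T + lam • S) x)‖ := by
          rw [hval lam x f hfx, halign]
        have h2 : ‖f ((T + lam • S) x)‖ ≤ F lam :=
          le_nrad _ ⟨x, f, hx, hf, hfx, rfl⟩
        have h3 : F lam ≤ F lam₀ := hmax (mem_sphere_zero_iff_norm.mpr hlam)
        linarith
      linarith
    exact ⟨lam₀, hlam₀, by rw [hSval]; exact le_antisymm hub hlb⟩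
end

section
/- Let X be a normed space of dimension at least 2. Then numerical radius parallelism on B(X) does not coincide with linear dependence: there exist T, S ∈ B(X) with T ∥_v S but T and S linearly independent. -/
open Filter Topology

variable {𝕜 : Type*} [RCLike 𝕜] {X : Type*} [NormedAddCommGroup X] [NormedSpace 𝕜 X]

lemma nrad_eq_of (T : X →L[𝕜] X) (c : ℝ)
    (hub : ∀ (x : X) (f : X →L[𝕜] 𝕜), ‖x‖ = 1 → ‖f‖ = 1 → f x = 1 → ‖f (T x)‖ ≤ c)
    (hmem : ∃ (x : X) (f : X →L[𝕜] 𝕜), ‖x‖ = 1 ∧ ‖f‖ = 1 ∧ f x = 1 ∧ c = ‖f (T x)‖) :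
    nrad T = c := by
  obtain ⟨x, f, hx, hf, hfx, hc⟩ := hmem
  have hm : c ∈ {r : ℝ | ∃ (x : X) (f : X →L[𝕜] 𝕜),
      ‖x‖ = 1 ∧ ‖f‖ = 1 ∧ f x = 1 ∧ r = ‖f (T x)‖} := ⟨x, f, hx, hf, hfx, hc⟩
  apply le_antisymm
  · apply csSup_le ⟨c, hm⟩
    rintro r ⟨x, f, hx, hf, hfx, rfl⟩
    exact hub x f hx hf hfx
  · apply le_csSup ⟨c, ?_⟩ hm
    rintro r ⟨x, f, hx, hf, hfx, rfl⟩
    exact hub x f hx hf hfx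

theorem stmt3 (hdim : 2 ≤ Module.rank 𝕜 X) :
    ∃ T S : X →L[𝕜] X, NRadParallel T S ∧ LinearIndependent 𝕜 ![T, S] := by
  -- get a unit vector
  have hnt : Nontrivial X := by
    rcases subsingleton_or_nontrivial X with h | h
    · exfalso
      have : Module.rank 𝕜 X = 0 := rank_subsingleton'  𝕜 X
      rw [this] at hdim; exact absurd hdim (by norm_num)
    · exact h
  obtain ⟨v, hv⟩ := exists_ne (0 : X)
  set x0 : X := (‖v‖ : 𝕜)⁻¹ • v with hx0def
  have hx0 : ‖x0‖ = 1 := by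
    rw [hx0def, norm_smul, norm_inv, RCLike.norm_ofReal, abs_norm]
    exact inv_mul_cancel₀ (norm_ne_zero_iff.mpr hv)
  have hx0ne : x0 ≠ 0 := by
    intro h; rw [h] at hx0; simp at hx0
  obtain ⟨f0, hf0, hfx0⟩ := exists_dual_vector 𝕜 x0 (norm_ne_zero_iff.mpr hx0ne)
  rw [hx0] at hfx0
  have hfx0' : f0 x0 = 1 := by rw [hfx0]; norm_num
  set P : X →L[𝕜] X := f0.smulRight x0 with hPdef
  have hPapp : ∀ y, P y = f0 y • x0 := fun y => rfl
  -- general bound: |f (P x)| ≤ 1 for pairs in the set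
  have key : ∀ (x : X) (f : X →L[𝕜] 𝕜), ‖x‖ = 1 → ‖f‖ = 1 → ‖f (P x)‖ ≤ 1 := by
    intro x f hx hf
    rw [hPapp, map_smul, smul_eq_mul, norm_mul]
    have h1 : ‖f0 x‖ ≤ 1 := by
      calc ‖f0 x‖ ≤ ‖f0‖ * ‖x‖ := f0.le_opNorm x
      _ = 1 := by rw [hf0, hx]; ring
    have h2 : ‖f x0‖ ≤ 1 := by
      calc ‖f x0‖ ≤ ‖f‖ * ‖x0‖ := f.le_opNorm x0
      _ = 1 := by rw [hf, hx0]; ring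
    calc ‖f0 x‖ * ‖f x0‖ ≤ 1 * 1 :=
      mul_le_mul h1 h2 (norm_nonneg _) zero_le_one
    _ = 1 := by ring
  have hPid : f0 (P x0) = 1 := by rw [hPapp, map_smul, hfx0', smul_eq_mul, mul_one]
  have hnradId : nrad (ContinuousLinearMap.id 𝕜 X) = 1 := by
    apply nrad_eq_of
    · intro x f hx hf hfx
      simp [hfx]
    · exact ⟨x0, f0, hx0, hf0, hfx0', by simp [hfx0']⟩
  have hnradP : nrad P = 1 := by
    apply nrad_eq_of
    · intro x f hx hf hfx
      exact key x f hx hf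
    · exact ⟨x0, f0, hx0, hf0, hfx0', by rw [hPid]; norm_num⟩
  have hnradSum : nrad (ContinuousLinearMap.id 𝕜 X + (1:𝕜) • P) = 2 := by
    apply nrad_eq_of
    · intro x f hx hf hfx
      have : f ((ContinuousLinearMap.id 𝕜 X + (1:𝕜) • P) x) = f x + f (P x) := by
        simp
      rw [this, hfx]
      calc ‖(1:𝕜) + f (P x)‖ ≤ ‖(1:𝕜)‖ + ‖f (P x)‖ := norm_add_le _ _
      _ ≤ 1 + 1 := by
          have := key x f hx hf
          simp only [norm_one]
          linarith
      _ = 2 := by norm_num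
    · refine ⟨x0, f0, hx0, hf0, hfx0', ?_⟩
      have : f0 ((ContinuousLinearMap.id 𝕜 X + (1:𝕜) • P) x0) = f0 x0 + f0 (P x0) := by
        simp
      rw [this, hfx0', hPid]
      norm_num
  refine ⟨ContinuousLinearMap.id 𝕜 X, P, ⟨1, by norm_num, ?_⟩, ?_⟩
  · rw [hnradSum, hnradId, hnradP]; norm_num
  · rw [LinearIndependent.pair_iff]
    intro s t hst
    have happ : ∀ y : X, s • y + (t * f0 y) • x0 = 0 := by
      intro y
      have := congrArg (fun (A : X →L[𝕜] X) => A y) hst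
      simpa [hPapp, smul_smul] using this
    have hs0 : s = 0 := by
      by_contra hs
      have hle : Module.rank 𝕜 X ≤ 1 := by
        rw [rank_le_one_iff]
        refine ⟨x0, fun y => ⟨-(s⁻¹ * (t * f0 y)), ?_⟩⟩
        have h2 : s • y = -((t * f0 y) • x0) := by
          rw [eq_neg_iff_add_eq_zero]; exact happ y
        calc -(s⁻¹ * (t * f0 y)) • x0 = s⁻¹ • -((t * f0 y) • x0) := by
              module
        _ = s⁻¹ • (s • y) := by rw [← h2]
        _ = y := by rw [smul_smul, inv_mul_cancel₀ hs, one_smul]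
      have h3 : (2:Cardinal) ≤ 1 := le_trans hdim hle
      norm_num at h3
    refine ⟨hs0, ?_⟩
    have h := happ x0
    rw [hs0, zero_smul, zero_add, hfx0', mul_one] at h
    have := smul_eq_zero.mp h
    rcases this with h | h
    · exact h
    · exact absurd h hx0ne
end

section
/- For T, S ∈ B(X), if there exist sequences (x_n) in S_X and (x_n*) in S_{X*} with x_n*(x_n) = 1 for all n such that lim |x_n*(T x_n)| = v(T) and lim |x_n*(S x_n)| = v(S), then T ∥_v S, i.e., v(T + λS) = v(T) + v(S) for some unimodular λ. -/
open Filter Topology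

variable {𝕜 : Type*} [RCLike 𝕜] {X : Type*} [NormedAddCommGroup X] [NormedSpace 𝕜 X]

noncomputable def mysgn (z : 𝕜) : 𝕜 := if z = 0 then 1 else (‖z‖ : 𝕜)⁻¹ * z

lemma mysgn_norm (z : 𝕜) : ‖mysgn z‖ = 1 := by
  unfold mysgn
  split_ifs with h
  · simp
  · rw [norm_mul, norm_inv, RCLike.norm_ofReal, abs_of_nonneg (norm_nonneg z),
      inv_mul_cancel₀ (norm_ne_zero_iff.mpr h)]

lemma key_norm (a b : 𝕜) : ‖a + (mysgn a * (mysgn b)⁻¹) * b‖ = ‖a‖ + ‖b‖ := by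
  by_cases hb : b = 0
  · simp [hb]
  by_cases ha : a = 0
  · have : ‖(mysgn a * (mysgn b)⁻¹) * b‖ = ‖b‖ := by
      rw [norm_mul, norm_mul, mysgn_norm, norm_inv, mysgn_norm]; ring
    subst ha
    rw [zero_add, this, norm_zero, zero_add]
  have hna : (‖a‖ : 𝕜) ≠ 0 := by
    simpa using norm_ne_zero_iff.mpr ha
  have hnb : (‖b‖ : 𝕜) ≠ 0 := by
    simpa using norm_ne_zero_iff.mpr hb
  have h1 : a + (mysgn a * (mysgn b)⁻¹) * b = (((‖a‖ + ‖b‖) / ‖a‖ : ℝ) : 𝕜) * a := by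
    simp only [mysgn, if_neg ha, if_neg hb]
    push_cast
    field_simp
  rw [h1, norm_mul, RCLike.norm_ofReal, abs_of_nonneg (by positivity),
    div_mul_cancel₀ _ (norm_ne_zero_iff.mpr ha)]

lemma nrad_bdd (T : X →L[𝕜] X) :
    BddAbove {r : ℝ | ∃ (x : X) (f : X →L[𝕜] 𝕜), ‖x‖ = 1 ∧ ‖f‖ = 1 ∧ f x = 1 ∧ r = ‖f (T x)‖} := by
  refine ⟨‖T‖, ?_⟩
  rintro r ⟨y, g, hy, hg, -, rfl⟩
  calc ‖g (T y)‖ ≤ ‖g‖ * ‖T y‖ := g.le_opNorm _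
    _ ≤ 1 * (‖T‖ * ‖y‖) := by rw [hg]; gcongr; exact T.le_opNorm _
    _ = ‖T‖ := by rw [hy]; ring

lemma le_nrad_s6 (T : X →L[𝕜] X) (y : X) (g : X →L[𝕜] 𝕜)
    (hy : ‖y‖ = 1) (hg : ‖g‖ = 1) (hgy : g y = 1) : ‖g (T y)‖ ≤ nrad T :=
  le_csSup (nrad_bdd T) ⟨y, g, hy, hg, hgy, rfl⟩

theorem stmt6 (T S : X →L[𝕜] X)
    (x : ℕ → X) (f : ℕ → (X →L[𝕜] 𝕜))
    (hx : ∀ n, ‖x n‖ = 1) (hf : ∀ n, ‖f n‖ = 1) (hfx : ∀ n, f n (x n) = 1)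
    (hT : Tendsto (fun n => ‖f n (T (x n))‖) atTop (𝓝 (nrad T)))
    (hS : Tendsto (fun n => ‖f n (S (x n))‖) atTop (𝓝 (nrad S))) :
    NRadParallel T S := by
  set a : ℕ → 𝕜 := fun n => f n (T (x n)) with ha
  set b : ℕ → 𝕜 := fun n => f n (S (x n)) with hb
  set l : ℕ → 𝕜 := fun n => mysgn (a n) * (mysgn (b n))⁻¹ with hl
  have hlnorm : ∀ n, ‖l n‖ = 1 := by
    intro n
    rw [hl]
    simp only [norm_mul, norm_inv, mysgn_norm]
    norm_num
  have hlmem : ∀ n, l n ∈ Metric.sphere (0 : 𝕜) 1 := by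
    intro n; simpa [mem_sphere_zero_iff_norm] using hlnorm n
  obtain ⟨lam, hlam_mem, φ, hφ, hconv⟩ :=
    (isCompact_sphere (0 : 𝕜) 1).tendsto_subseq hlmem
  have hlam : ‖lam‖ = 1 := by simpa [mem_sphere_zero_iff_norm] using hlam_mem
  refine ⟨lam, hlam, ?_⟩
  have happ : ∀ (μ : 𝕜) n, (f n) ((T + μ • S) (x n)) = a n + μ * b n := by
    intro μ n
    simp [ha, hb, map_add, smul_eq_mul]
  have hub : nrad (T + lam • S) ≤ nrad T + nrad S := by
    apply csSup_le
    · exact ⟨‖f 0 ((T + lam • S) (x 0))‖, x 0, f 0, hx 0, hf 0, hfx 0, rfl⟩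
    rintro r ⟨y, g, hy, hg, hgy, rfl⟩
    have : g ((T + lam • S) y) = g (T y) + lam * g (S y) := by
      simp [map_add, smul_eq_mul]
    calc ‖g ((T + lam • S) y)‖ ≤ ‖g (T y)‖ + ‖lam * g (S y)‖ := by
          rw [this]; exact norm_add_le _ _
      _ ≤ nrad T + nrad S := by
          rw [norm_mul, hlam, one_mul]
          exact add_le_add (le_nrad_s6 T y g hy hg hgy) (le_nrad_s6 S y g hy hg hgy)
  have hlb : nrad T + nrad S ≤ nrad (T + lam • S) := by
    have hseq : Tendsto (fun k => ‖a (φ k)‖ + ‖b (φ k)‖ - ‖lam - l (φ k)‖ * ‖b (φ k)‖)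
        atTop (𝓝 (nrad T + nrad S)) := by
      have hTc : Tendsto (fun k => ‖a (φ k)‖) atTop (𝓝 (nrad T)) :=
        hT.comp (hφ.tendsto_atTop)
      have hSc : Tendsto (fun k => ‖b (φ k)‖) atTop (𝓝 (nrad S)) :=
        hS.comp (hφ.tendsto_atTop)
      have hlc : Tendsto (fun k => ‖lam - l (φ k)‖) atTop (𝓝 0) := by
        have := (tendsto_const_nhds (x := lam)).sub hconv
        simpa using this.norm
      have := (hTc.add hSc).sub (hlc.mul hSc)
      simpa using this
    refine le_of_tendsto hseq (Eventually.of_forall fun k => ?_)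
    have hkey : ‖a (φ k) + l (φ k) * b (φ k)‖ = ‖a (φ k)‖ + ‖b (φ k)‖ := key_norm _ _
    have h2 : ‖a (φ k) + l (φ k) * b (φ k)‖ - ‖lam - l (φ k)‖ * ‖b (φ k)‖
        ≤ ‖a (φ k) + lam * b (φ k)‖ := by
      have : a (φ k) + l (φ k) * b (φ k)
          = (a (φ k) + lam * b (φ k)) + (l (φ k) - lam) * b (φ k) := by ring
      calc ‖a (φ k) + l (φ k) * b (φ k)‖ - ‖lam - l (φ k)‖ * ‖b (φ k)‖
          ≤ (‖a (φ k) + lam * b (φ k)‖ + ‖(l (φ k) - lam) * b (φ k)‖)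
            - ‖lam - l (φ k)‖ * ‖b (φ k)‖ := by
            rw [this]; gcongr; exact norm_add_le _ _
        _ = ‖a (φ k) + lam * b (φ k)‖ := by
            rw [norm_mul, norm_sub_rev]; ring
    have h3 : ‖a (φ k) + lam * b (φ k)‖ ≤ nrad (T + lam • S) := by
      have := le_nrad_s6 (T + lam • S) (x (φ k)) (f (φ k)) (hx _) (hf _) (hfx _)
      rwa [happ] at this
    rw [← hkey]
    exact h2.trans h3
  linarith
end

section
/- Let X be a finite dimensional normed space and T, S ∈ B(X). Then T ∥_v S if and only if there exist x ∈ S_X and x* ∈ J(x) such that |x*(Tx)| = v(T) and |x*(Sx)| = v(S). -/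
open Filter Topology

variable {𝕜 : Type*} [RCLike 𝕜] {X : Type*} [NormedAddCommGroup X] [NormedSpace 𝕜 X]

namespace NradAux

/-- The attainment set `{(x, f) : ‖x‖ = 1, ‖f‖ = 1, f x = 1}`. -/
def Kset (𝕜 X : Type*) [RCLike 𝕜] [NormedAddCommGroup X] [NormedSpace 𝕜 X] :
    Set (X × (X →L[𝕜] 𝕜)) :=
  {p | ‖p.1‖ = 1 ∧ ‖p.2‖ = 1 ∧ p.2 p.1 = 1}

/-- The set whose supremum defines `nrad`. -/
def Aset (T : X →L[𝕜] X) : Set ℝ :=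
  {r : ℝ | ∃ (x : X) (f : X →L[𝕜] 𝕜), ‖x‖ = 1 ∧ ‖f‖ = 1 ∧ f x = 1 ∧ r = ‖f (T x)‖}

lemma nrad_eq_sSup (T : X →L[𝕜] X) : nrad T = sSup (Aset T) := rfl

lemma aset_eq_image (T : X →L[𝕜] X) :
    Aset T = (fun p : X × (X →L[𝕜] 𝕜) => ‖p.2 (T p.1)‖) '' Kset 𝕜 X := by
  ext r
  constructor
  · rintro ⟨x, f, hx, hf, hfx, rfl⟩
    exact ⟨(x, f), ⟨hx, hf, hfx⟩, rfl⟩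
  · rintro ⟨⟨x, f⟩, ⟨hx, hf, hfx⟩, rfl⟩
    exact ⟨x, f, hx, hf, hfx, rfl⟩

lemma bddAbove_aset (T : X →L[𝕜] X) : BddAbove (Aset T) := by
  refine ⟨‖T‖, ?_⟩
  rintro r ⟨x, f, hx, hf, hfx, rfl⟩
  calc ‖f (T x)‖ ≤ ‖f‖ * ‖T x‖ := f.le_opNorm _
    _ ≤ 1 * (‖T‖ * ‖x‖) := by rw [hf]; gcongr; exact T.le_opNorm x
    _ = ‖T‖ := by rw [hx]; ring

lemma kset_nonempty [Nontrivial X] : (Kset 𝕜 X).Nonempty := by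
  obtain ⟨x, hx⟩ := exists_ne (0 : X)
  set y : X := ((‖x‖⁻¹ : ℝ) : 𝕜) • x with hy
  have hxn : ‖x‖ ≠ 0 := norm_ne_zero_iff.2 hx
  have hyn : ‖y‖ = 1 := by
    rw [hy, norm_smul, RCLike.norm_ofReal, abs_of_nonneg (by positivity), inv_mul_cancel₀ hxn]
  have hy0 : y ≠ 0 := by
    intro h; rw [h, norm_zero] at hyn; norm_num at hyn
  obtain ⟨g, hg, hgy⟩ := exists_dual_vector 𝕜 y (norm_ne_zero_iff.2 hy0)
  exact ⟨(y, g), hyn, hg, by rw [hgy, hyn]; norm_num⟩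

lemma aset_nonempty [Nontrivial X] (T : X →L[𝕜] X) : (Aset T).Nonempty := by
  obtain ⟨⟨x, f⟩, hx, hf, hfx⟩ := kset_nonempty (𝕜 := 𝕜) (X := X)
  exact ⟨‖f (T x)‖, x, f, hx, hf, hfx, rfl⟩

lemma le_nrad (T : X →L[𝕜] X) {x : X} {f : X →L[𝕜] 𝕜}
    (hx : ‖x‖ = 1) (hf : ‖f‖ = 1) (hfx : f x = 1) : ‖f (T x)‖ ≤ nrad T :=
  le_csSup (bddAbove_aset T) ⟨x, f, hx, hf, hfx, rfl⟩

lemma kset_isCompact [FiniteDimensional 𝕜 X] : IsCompact (Kset 𝕜 X) := by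
  have hclosed : IsClosed (Kset 𝕜 X) := by
    have h1 : IsClosed {p : X × (X →L[𝕜] 𝕜) | ‖p.1‖ = 1} :=
      isClosed_eq (continuous_norm.comp continuous_fst) continuous_const
    have h2 : IsClosed {p : X × (X →L[𝕜] 𝕜) | ‖p.2‖ = 1} :=
      isClosed_eq (continuous_norm.comp continuous_snd) continuous_const
    have h3 : IsClosed {p : X × (X →L[𝕜] 𝕜) | p.2 p.1 = 1} := by
      have hc : Continuous fun p : X × (X →L[𝕜] 𝕜) => p.2 p.1 :=
        isBoundedBilinearMap_apply.continuous.comp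
          (continuous_snd.prodMk continuous_fst)
      exact isClosed_eq hc continuous_const
    have : Kset 𝕜 X = {p : X × (X →L[𝕜] 𝕜) | ‖p.1‖ = 1} ∩
        ({p | ‖p.2‖ = 1} ∩ {p | p.2 p.1 = 1}) := by
      ext p; simp [Kset, Set.mem_inter_iff, and_assoc]
    rw [this]
    exact h1.inter (h2.inter h3)
  have hsub : Kset 𝕜 X ⊆ Metric.closedBall (0 : X) 1 ×ˢ Metric.closedBall (0 : X →L[𝕜] 𝕜) 1 := by
    rintro ⟨x, f⟩ ⟨hx, hf, -⟩
    constructor <;> simp [mem_closedBall_zero_iff] <;> [exact hx.le; exact hf.le]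
  haveI : ProperSpace X := FiniteDimensional.proper 𝕜 X
  haveI : ProperSpace (X →L[𝕜] 𝕜) := FiniteDimensional.proper 𝕜 _
  exact ((isCompact_closedBall _ _).prod (isCompact_closedBall _ _)).of_isClosed_subset
    hclosed hsub

lemma nrad_attained [FiniteDimensional 𝕜 X] [Nontrivial X] (T : X →L[𝕜] X) :
    ∃ (x : X) (f : X →L[𝕜] 𝕜), ‖x‖ = 1 ∧ ‖f‖ = 1 ∧ f x = 1 ∧ ‖f (T x)‖ = nrad T := by
  have hcont : ContinuousOn (fun p : X × (X →L[𝕜] 𝕜) => ‖p.2 (T p.1)‖) (Kset 𝕜 X) := by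
    have : Continuous fun p : X × (X →L[𝕜] 𝕜) => ‖p.2 (T p.1)‖ := by
      have hc : Continuous fun p : X × (X →L[𝕜] 𝕜) => p.2 (T p.1) :=
        isBoundedBilinearMap_apply.continuous.comp
          (continuous_snd.prodMk (T.continuous.comp continuous_fst))
      exact hc.norm
    exact this.continuousOn
  obtain ⟨p, hpK, hmax⟩ := kset_isCompact.exists_isMaxOn kset_nonempty hcont
  refine ⟨p.1, p.2, hpK.1, hpK.2.1, hpK.2.2, ?_⟩
  rw [nrad_eq_sSup, aset_eq_image]
  refine le_antisymm (le_csSup ?_ ⟨p, hpK, rfl⟩) (csSup_le ?_ ?_)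
  · rw [← aset_eq_image]; exact bddAbove_aset T
  · exact ⟨_, ⟨p, hpK, rfl⟩⟩
  · rintro r ⟨q, hqK, rfl⟩
    exact hmax hqK

lemma nrad_add_smul_le [Nontrivial X] (T S : X →L[𝕜] X) (lam : 𝕜) (hlam : ‖lam‖ = 1) :
    nrad (T + lam • S) ≤ nrad T + nrad S := by
  rw [nrad_eq_sSup]
  refine csSup_le (aset_nonempty _) ?_
  rintro r ⟨x, f, hx, hf, hfx, rfl⟩
  have : (T + lam • S) x = T x + lam • S x := by simp
  calc ‖f ((T + lam • S) x)‖ = ‖f (T x) + lam • f (S x)‖ := by rw [this]; simp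
    _ ≤ ‖f (T x)‖ + ‖lam • f (S x)‖ := norm_add_le _ _
    _ = ‖f (T x)‖ + ‖f (S x)‖ := by rw [norm_smul, hlam, one_mul]
    _ ≤ nrad T + nrad S := add_le_add (le_nrad T hx hf hfx) (le_nrad S hx hf hfx)

lemma exists_unimodular (a b : 𝕜) :
    ∃ lam : 𝕜, ‖lam‖ = 1 ∧ ‖a + lam * b‖ = ‖a‖ + ‖b‖ := by
  by_cases hb : b = 0
  · exact ⟨1, norm_one, by simp [hb]⟩
  by_cases ha : a = 0
  · exact ⟨1, norm_one, by simp [ha]⟩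
  have hna : (‖a‖ : ℝ) ≠ 0 := norm_ne_zero_iff.2 ha
  have hnb : (‖b‖ : ℝ) ≠ 0 := norm_ne_zero_iff.2 hb
  refine ⟨a * (starRingEnd 𝕜) b * ((‖a‖ : 𝕜) * (‖b‖ : 𝕜))⁻¹, ?_, ?_⟩
  · rw [norm_mul, norm_mul, norm_inv, norm_mul, RCLike.norm_conj]
    rw [RCLike.norm_ofReal, RCLike.norm_ofReal, abs_of_nonneg (norm_nonneg a),
      abs_of_nonneg (norm_nonneg b)]
    field_simp
  · have key : a + a * (starRingEnd 𝕜) b * ((‖a‖ : 𝕜) * (‖b‖ : 𝕜))⁻¹ * b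
        = a * ((‖a‖ : 𝕜) + (‖b‖ : 𝕜)) * (‖a‖ : 𝕜)⁻¹ := by
      have hb2 : (starRingEnd 𝕜) b * b = (‖b‖ : 𝕜) ^ 2 := by
        rw [mul_comm]; exact RCLike.mul_conj b
      have hca : ((‖a‖ : ℝ) : 𝕜) ≠ 0 := by exact_mod_cast RCLike.ofReal_ne_zero.2 hna
      have hcb : ((‖b‖ : ℝ) : 𝕜) ≠ 0 := by exact_mod_cast RCLike.ofReal_ne_zero.2 hnb
      field_simp
      linear_combination hb2
    rw [key, norm_mul, norm_mul, norm_inv, RCLike.norm_ofReal, abs_of_nonneg (norm_nonneg a)]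
    have : ‖((‖a‖ : 𝕜) + (‖b‖ : 𝕜))‖ = ‖a‖ + ‖b‖ := by
      rw [← RCLike.ofReal_add, RCLike.norm_ofReal]
      exact abs_of_nonneg (add_nonneg (norm_nonneg a) (norm_nonneg b))
    rw [this]
    field_simp

end NradAux

open NradAux in
theorem stmt7 [FiniteDimensional 𝕜 X] (hdim : 2 ≤ Module.rank 𝕜 X)
    (T S : X →L[𝕜] X) :
    NRadParallel T S ↔
      ∃ (x : X) (f : X →L[𝕜] 𝕜), ‖x‖ = 1 ∧ ‖f‖ = 1 ∧ f x = 1 ∧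
        ‖f (T x)‖ = nrad T ∧ ‖f (S x)‖ = nrad S := by
  have hnt : Nontrivial X := by
    rw [← rank_pos_iff_nontrivial (R := 𝕜)]
    exact lt_of_lt_of_le (by norm_num) hdim
  constructor
  · rintro ⟨lam, hlam, heq⟩
    obtain ⟨x, f, hx, hf, hfx, hmax⟩ := nrad_attained (T + lam • S)
    have hval : ‖f (T x) + lam • f (S x)‖ = nrad T + nrad S := by
      have : f ((T + lam • S) x) = f (T x) + lam • f (S x) := by simp
      rw [← this, hmax, heq]
    have h1 : ‖f (T x)‖ ≤ nrad T := le_nrad T hx hf hfx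
    have h2 : ‖f (S x)‖ ≤ nrad S := le_nrad S hx hf hfx
    have h3 : nrad T + nrad S ≤ ‖f (T x)‖ + ‖f (S x)‖ := by
      calc nrad T + nrad S = ‖f (T x) + lam • f (S x)‖ := hval.symm
        _ ≤ ‖f (T x)‖ + ‖lam • f (S x)‖ := norm_add_le _ _
        _ = ‖f (T x)‖ + ‖f (S x)‖ := by rw [norm_smul, hlam, one_mul]
    exact ⟨x, f, hx, hf, hfx, by linarith, by linarith⟩
  · rintro ⟨x, f, hx, hf, hfx, hT, hS⟩
    obtain ⟨lam, hlam, hsum⟩ := exists_unimodular (f (T x)) (f (S x))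
    refine ⟨lam, hlam, le_antisymm (nrad_add_smul_le T S lam hlam) ?_⟩
    calc nrad T + nrad S = ‖f (T x) + lam * f (S x)‖ := by rw [← hT, ← hS, hsum]
      _ = ‖f ((T + lam • S) x)‖ := by simp [smul_eq_mul]
      _ ≤ nrad (T + lam • S) := le_nrad _ hx hf hfx
end

section
/- Let x, y ∈ X, x* ∈ J(x) and y* ∈ J(y). If the rank-one operators x*(·)x and y*(·)y are numerical radius parallel, then x is norm parallel to y, i.e., ‖x + λy‖ = ‖x‖ + ‖y‖ for some unimodular λ. -/
open Filter Topology

variable {𝕜 : Type*} [RCLike 𝕜] {X : Type*} [NormedAddCommGroup X] [NormedSpace 𝕜 X]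

lemma unit_of (f : X →L[𝕜] 𝕜) (x : X) (hfx : f x = (‖x‖ : 𝕜)) (hx : x ≠ 0) :
    ‖(‖x‖:𝕜)⁻¹ • x‖ = 1 ∧ f ((‖x‖:𝕜)⁻¹ • x) = 1 := by
  have hnx : ‖x‖ ≠ 0 := norm_ne_zero_iff.mpr hx
  constructor
  · rw [norm_smul, norm_inv, RCLike.norm_ofReal, abs_of_nonneg (norm_nonneg x)]
    field_simp
  · rw [map_smul, hfx, smul_eq_mul]
    field_simp [RCLike.ofReal_ne_zero.mpr hnx]

lemma nrad_smulRight (f : X →L[𝕜] 𝕜) (x : X) (hf : ‖f‖ = 1) (hfx : f x = (‖x‖ : 𝕜)) :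
    nrad (f.smulRight x) = ‖x‖ := by
  have hub : ∀ r ∈ {r : ℝ | ∃ (u : X) (h : X →L[𝕜] 𝕜), ‖u‖ = 1 ∧ ‖h‖ = 1 ∧ h u = 1 ∧
      r = ‖h ((f.smulRight x) u)‖}, r ≤ ‖x‖ := by
    rintro r ⟨u, h, hu, hh, hhu, rfl⟩
    have h1 : ‖f u‖ ≤ 1 := by
      calc ‖f u‖ ≤ ‖f‖ * ‖u‖ := f.le_opNorm u
      _ = 1 := by rw [hf, hu, one_mul]
    have h2 : ‖h x‖ ≤ ‖x‖ := by
      calc ‖h x‖ ≤ ‖h‖ * ‖x‖ := h.le_opNorm x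
      _ = ‖x‖ := by rw [hh, one_mul]
    calc ‖h ((f.smulRight x) u)‖ = ‖f u‖ * ‖h x‖ := by
          simp [ContinuousLinearMap.smulRight_apply, map_smul, smul_eq_mul, norm_mul]
      _ ≤ 1 * ‖x‖ := mul_le_mul h1 h2 (norm_nonneg _) zero_le_one
      _ = ‖x‖ := one_mul _
  apply le_antisymm
  · exact Real.sSup_le hub (norm_nonneg x)
  · by_cases hx : x = 0
    · subst hx
      simp only [norm_zero]
      have hfne : f ≠ 0 := by intro h0; rw [h0] at hf; simp at hf
      obtain ⟨u, hu⟩ : ∃ u, f u ≠ 0 := by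
        by_contra hc; push_neg at hc
        exact hfne (ContinuousLinearMap.ext fun v => by simp [hc v])
      have hune : u ≠ 0 := fun h0 => hu (by simp [h0])
      obtain ⟨h, hh1, hhu⟩ := exists_dual_vector 𝕜 u (norm_ne_zero_iff.mpr hune)
      have := unit_of h u hhu hune
      apply le_csSup ⟨‖(0:X)‖, hub⟩
      exact ⟨(‖u‖:𝕜)⁻¹ • u, h, this.1, hh1, this.2, by simp⟩
    · obtain ⟨hu1, hu2⟩ := unit_of f x hfx hx
      apply le_csSup ⟨‖x‖, hub⟩
      refine ⟨(‖x‖:𝕜)⁻¹ • x, f, hu1, hf, hu2, ?_⟩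
      rw [ContinuousLinearMap.smulRight_apply, hu2, one_smul, hfx, RCLike.norm_ofReal,
        abs_of_nonneg (norm_nonneg x)]

lemma norm_sub_normalize (a : 𝕜) (h0 : a ≠ 0) (h1 : ‖a‖ ≤ 1) :
    ‖a - a * (‖a‖:𝕜)⁻¹‖ = 1 - ‖a‖ := by
  have hna : ‖a‖ ≠ 0 := norm_ne_zero_iff.mpr h0
  have e1 : a - a * (‖a‖:𝕜)⁻¹ = a * ((1 : 𝕜) - (‖a‖:𝕜)⁻¹) := by ring
  have e2 : ((1 : 𝕜) - (‖a‖:𝕜)⁻¹) = ((1 - ‖a‖⁻¹ : ℝ) : 𝕜) := by push_cast; ring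
  rw [e1, norm_mul, e2, RCLike.norm_ofReal]
  have hpos : 0 < ‖a‖ := lt_of_le_of_ne (norm_nonneg a) (Ne.symm hna)
  have hge : (1:ℝ) ≤ ‖a‖⁻¹ := one_le_inv_iff₀.mpr ⟨hpos, h1⟩
  rw [abs_of_nonpos (by linarith)]
  field_simp
  ring

theorem stmt10 (x y : X) (f g : X →L[𝕜] 𝕜)
    (hf1 : ‖f‖ = 1) (hfx : f x = (‖x‖ : 𝕜))
    (hg1 : ‖g‖ = 1) (hgy : g y = (‖y‖ : 𝕜))
    (h : NRadParallel (f.smulRight x) (g.smulRight y)) :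
    ∃ lam : 𝕜, ‖lam‖ = 1 ∧ ‖x + lam • y‖ = ‖x‖ + ‖y‖ := by
  by_cases hx : x = 0
  · exact ⟨1, by simp, by simp [hx]⟩
  by_cases hy : y = 0
  · exact ⟨1, by simp, by simp [hy]⟩
  obtain ⟨lam, hlam, heq⟩ := h
  rw [nrad_smulRight f x hf1 hfx, nrad_smulRight g y hg1 hgy] at heq
  set C : X →L[𝕜] X := f.smulRight x + lam • g.smulRight y with hC
  set B : Set ℝ := {r : ℝ | ∃ (u : X) (h : X →L[𝕜] 𝕜), ‖u‖ = 1 ∧ ‖h‖ = 1 ∧ h u = 1 ∧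
      r = ‖h (C u)‖} with hB
  have hBne : B.Nonempty := by
    obtain ⟨hu1, hu2⟩ := unit_of f x hfx hx
    exact ⟨_, (‖x‖:𝕜)⁻¹ • x, f, hu1, hf1, hu2, rfl⟩
  -- the maximum of ‖x + μ • y‖ over the unit sphere of 𝕜
  have hK : IsCompact (Metric.sphere (0:𝕜) 1) := isCompact_sphere 0 1
  have hKne : (Metric.sphere (0:𝕜) 1).Nonempty := ⟨1, by simp⟩
  have hcont : ContinuousOn (fun μ : 𝕜 => ‖x + μ • y‖) (Metric.sphere (0:𝕜) 1) :=
    ((continuous_const.add (continuous_id.smul continuous_const)).norm).continuousOn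
  obtain ⟨μ₀, hμ₀K, hmax⟩ := hK.exists_isMaxOn hKne hcont
  have hμ₀ : ‖μ₀‖ = 1 := mem_sphere_zero_iff_norm.mp hμ₀K
  refine ⟨μ₀, hμ₀, le_antisymm ?_ ?_⟩
  · calc ‖x + μ₀ • y‖ ≤ ‖x‖ + ‖μ₀ • y‖ := norm_add_le _ _
      _ = ‖x‖ + ‖y‖ := by rw [norm_smul, hμ₀, one_mul]
  · apply le_of_forall_pos_le_add
    intro ε hε
    set ε' : ℝ := min (ε/3) (min (‖x‖/2) (‖y‖/2)) with hε'
    have hxpos : 0 < ‖x‖ := norm_pos_iff.mpr hx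
    have hypos : 0 < ‖y‖ := norm_pos_iff.mpr hy
    have hε'pos : 0 < ε' := lt_min (by linarith) (lt_min (by linarith) (by linarith))
    have hε'3 : ε' ≤ ε/3 := min_le_left _ _
    have hε'x : ε' ≤ ‖x‖/2 := (min_le_right _ _).trans (min_le_left _ _)
    have hε'y : ε' ≤ ‖y‖/2 := (min_le_right _ _).trans (min_le_right _ _)
    have hlt : ‖x‖ + ‖y‖ - ε' < sSup B := by
      rw [show sSup B = nrad C from rfl, heq]; linarith
    obtain ⟨r, hrB, hr⟩ := exists_lt_of_lt_csSup hBne hlt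
    obtain ⟨u, k, hu1, hk1, hku, rfl⟩ := hrB
    -- unpack the value
    set a : 𝕜 := f u with ha
    set b : 𝕜 := g u with hb
    set p : 𝕜 := k x with hp
    set q : 𝕜 := k y with hq
    have hCu : k (C u) = a * p + lam * (b * q) := by
      simp [hC, ContinuousLinearMap.smulRight_apply, map_smul, smul_eq_mul, mul_assoc]
      rfl
    have hna : ‖a‖ ≤ 1 := by
      calc ‖a‖ ≤ ‖f‖ * ‖u‖ := f.le_opNorm u
        _ = 1 := by rw [hf1, hu1, one_mul]
    have hnb : ‖b‖ ≤ 1 := by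
      calc ‖b‖ ≤ ‖g‖ * ‖u‖ := g.le_opNorm u
        _ = 1 := by rw [hg1, hu1, one_mul]
    have hnp : ‖p‖ ≤ ‖x‖ := by
      calc ‖p‖ ≤ ‖k‖ * ‖x‖ := k.le_opNorm x
        _ = ‖x‖ := by rw [hk1, one_mul]
    have hnq : ‖q‖ ≤ ‖y‖ := by
      calc ‖q‖ ≤ ‖k‖ * ‖y‖ := k.le_opNorm y
        _ = ‖y‖ := by rw [hk1, one_mul]
    have hr' : ‖x‖ + ‖y‖ - ε' < ‖a * p + lam * (b * q)‖ := by rwa [hCu] at hr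
    -- lower bounds on ‖a‖, ‖b‖
    have hbound1 : ‖a * p + lam * (b * q)‖ ≤ ‖a‖ * ‖x‖ + ‖y‖ := by
      calc ‖a * p + lam * (b * q)‖ ≤ ‖a * p‖ + ‖lam * (b * q)‖ := norm_add_le _ _
        _ = ‖a‖ * ‖p‖ + ‖b‖ * ‖q‖ := by rw [norm_mul, norm_mul, norm_mul, hlam, one_mul]
        _ ≤ ‖a‖ * ‖x‖ + 1 * ‖y‖ := by
            gcongr
        _ = ‖a‖ * ‖x‖ + ‖y‖ := by rw [one_mul]
    have hbound2 : ‖a * p + lam * (b * q)‖ ≤ ‖x‖ + ‖b‖ * ‖y‖ := by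
      calc ‖a * p + lam * (b * q)‖ ≤ ‖a * p‖ + ‖lam * (b * q)‖ := norm_add_le _ _
        _ = ‖a‖ * ‖p‖ + ‖b‖ * ‖q‖ := by rw [norm_mul, norm_mul, norm_mul, hlam, one_mul]
        _ ≤ 1 * ‖x‖ + ‖b‖ * ‖y‖ := by gcongr
        _ = ‖x‖ + ‖b‖ * ‖y‖ := by rw [one_mul]
    have hax : ‖x‖ - ε' < ‖a‖ * ‖x‖ := by linarith
    have hby : ‖y‖ - ε' < ‖b‖ * ‖y‖ := by linarith
    have h1a : (1 - ‖a‖) * ‖x‖ < ε' := by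
      have : (1 - ‖a‖) * ‖x‖ = ‖x‖ - ‖a‖ * ‖x‖ := by ring
      linarith
    have h1b : (1 - ‖b‖) * ‖y‖ < ε' := by
      have : (1 - ‖b‖) * ‖y‖ = ‖y‖ - ‖b‖ * ‖y‖ := by ring
      linarith
    have hapos : 0 < ‖a‖ := by
      have hprod : 0 < ‖a‖ * ‖x‖ := by linarith
      rcases mul_pos_iff.mp hprod with ⟨h, _⟩ | ⟨h, _⟩
      · exact h
      · linarith [norm_nonneg a]
    have hbpos : 0 < ‖b‖ := by
      have hprod : 0 < ‖b‖ * ‖y‖ := by linarith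
      rcases mul_pos_iff.mp hprod with ⟨h, _⟩ | ⟨h, _⟩
      · exact h
      · linarith [norm_nonneg b]
    have hane : a ≠ 0 := norm_pos_iff.mp hapos
    have hbne : b ≠ 0 := norm_pos_iff.mp hbpos
    have hnane : (‖a‖:𝕜) ≠ 0 := RCLike.ofReal_ne_zero.mpr (ne_of_gt hapos)
    have hnbne : (‖b‖:𝕜) ≠ 0 := RCLike.ofReal_ne_zero.mpr (ne_of_gt hbpos)
    -- define the unimodular μ
    set μ : 𝕜 := lam * (b * (‖b‖:𝕜)⁻¹) * ((‖a‖:𝕜) * a⁻¹) with hμ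
    have hμ1 : ‖μ‖ = 1 := by
      have hn : ‖(‖a‖:𝕜)‖ = ‖a‖ := by rw [RCLike.norm_ofReal, abs_of_nonneg (norm_nonneg a)]
      have hn' : ‖(‖b‖:𝕜)‖ = ‖b‖ := by rw [RCLike.norm_ofReal, abs_of_nonneg (norm_nonneg b)]
      rw [hμ, norm_mul, norm_mul, norm_mul, norm_mul, norm_inv, norm_inv, hlam, hn, hn']
      field_simp
    have hμK : μ ∈ Metric.sphere (0:𝕜) 1 := mem_sphere_zero_iff_norm.mpr hμ1
    -- key decomposition
    have hsμ : (a * (‖a‖:𝕜)⁻¹) * μ = lam * (b * (‖b‖:𝕜)⁻¹) := by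
      field_simp [hμ]
      rw [hμ]; field_simp
    have hdecomp : a * p + lam * (b * q)
        = (a * (‖a‖:𝕜)⁻¹) * (p + μ * q)
          + ((a - a * (‖a‖:𝕜)⁻¹) * p + lam * (b - b * (‖b‖:𝕜)⁻¹) * q) := by
      have e : (a * (‖a‖:𝕜)⁻¹) * (p + μ * q)
          = (a * (‖a‖:𝕜)⁻¹) * p + ((a * (‖a‖:𝕜)⁻¹) * μ) * q := by ring
      rw [e, hsμ]; ring
    have hnorm_s : ‖a * (‖a‖:𝕜)⁻¹‖ = 1 := by
      have hn : ‖(‖a‖:𝕜)‖ = ‖a‖ := by rw [RCLike.norm_ofReal, abs_of_nonneg (norm_nonneg a)]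
      rw [norm_mul, norm_inv, hn]; field_simp
    -- norm of p + μ q ≤ ‖x + μ • y‖
    have hpq : ‖p + μ * q‖ ≤ ‖x + μ • y‖ := by
      have : p + μ * q = k (x + μ • y) := by
        rw [map_add, map_smul, smul_eq_mul, hp, hq]
      rw [this]
      calc ‖k (x + μ • y)‖ ≤ ‖k‖ * ‖x + μ • y‖ := k.le_opNorm _
        _ = ‖x + μ • y‖ := by rw [hk1, one_mul]
    have herr1 : ‖(a - a * (‖a‖:𝕜)⁻¹) * p‖ ≤ (1 - ‖a‖) * ‖x‖ := by
      rw [norm_mul, norm_sub_normalize a hane hna]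
      gcongr
    have herr2 : ‖lam * (b - b * (‖b‖:𝕜)⁻¹) * q‖ ≤ (1 - ‖b‖) * ‖y‖ := by
      rw [norm_mul, norm_mul, hlam, one_mul, norm_sub_normalize b hbne hnb]
      gcongr
    have hmain : ‖a * p + lam * (b * q)‖ ≤ ‖x + μ₀ • y‖ + (1 - ‖a‖) * ‖x‖ + (1 - ‖b‖) * ‖y‖ := by
      rw [hdecomp]
      calc ‖(a * (‖a‖:𝕜)⁻¹) * (p + μ * q)
          + ((a - a * (‖a‖:𝕜)⁻¹) * p + lam * (b - b * (‖b‖:𝕜)⁻¹) * q)‖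
          ≤ ‖(a * (‖a‖:𝕜)⁻¹) * (p + μ * q)‖ + (‖(a - a * (‖a‖:𝕜)⁻¹) * p‖
            + ‖lam * (b - b * (‖b‖:𝕜)⁻¹) * q‖) :=
            (norm_add_le _ _).trans (by gcongr; exact norm_add_le _ _)
        _ = ‖p + μ * q‖ + (‖(a - a * (‖a‖:𝕜)⁻¹) * p‖ + ‖lam * (b - b * (‖b‖:𝕜)⁻¹) * q‖) := by
            rw [norm_mul, hnorm_s, one_mul]
        _ ≤ ‖x + μ • y‖ + ((1 - ‖a‖) * ‖x‖ + (1 - ‖b‖) * ‖y‖) := by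
            gcongr
        _ ≤ ‖x + μ₀ • y‖ + ((1 - ‖a‖) * ‖x‖ + (1 - ‖b‖) * ‖y‖) :=
            add_le_add_left (hmax hμK) _
        _ = ‖x + μ₀ • y‖ + (1 - ‖a‖) * ‖x‖ + (1 - ‖b‖) * ‖y‖ := by ring
    linarith
end
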